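/- Let ξ : ℝ → Matrix (Fin 2) (Fin 2) ℝ be differentiable at t with det (ξ t) > 0. Define X : ℝ → ℝ by X s = (1/2) * Real.log (det (ξ s)) and σ : ℝ → Matrix (Fin 2) (Fin 2) ℝ by σ s = Real.exp (- X s) • ξ s (so that det (σ s) = 1). Then Matrix.trace ((ξ t)⁻¹ * deriv ξ t * (ξ t)⁻¹ * deriv ξ t) = 2 * (deriv X t)^2 + Matrix.trace ((σ t)⁻¹ * deriv σ t * (σ t)⁻¹ * deriv σ t). -/

import Mathlib

attribute [local instance] Matrix.normedAddCommGroup Matrix.normedSpace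

/-- The metric `ξ^{mp} ξ^{nq} dξ_{mn} dξ_{pq}` on positive `2 × 2` matrices splits as the
product of a line (coordinate `X = (1/2) log det ξ`) and the metric on the unimodular
matrices `σ = e^{-X} ξ` (the Poincaré plane), evaluated along a curve `ξ(t)`. -/
theorem trace_sq_splitting
    (t : ℝ) (ξ : ℝ → Matrix (Fin 2) (Fin 2) ℝ)
    (hξ : DifferentiableAt ℝ ξ t) (hdet : 0 < (ξ t).det)
    (X : ℝ → ℝ) (hX : ∀ s, X s = (1/2) * Real.log (ξ s).det)
    (σ : ℝ → Matrix (Fin 2) (Fin 2) ℝ)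
    (hσ : ∀ s, σ s = Real.exp (- X s) • ξ s) :
    Matrix.trace ((ξ t)⁻¹ * deriv ξ t * (ξ t)⁻¹ * deriv ξ t) =
      2 * (deriv X t)^2 +
        Matrix.trace ((σ t)⁻¹ * deriv σ t * (σ t)⁻¹ * deriv σ t) := by
  set A : Matrix (Fin 2) (Fin 2) ℝ := ξ t with hAdef
  set A' : Matrix (Fin 2) (Fin 2) ℝ := deriv ξ t with hA'def
  have h1 : HasDerivAt ξ A' t := hξ.hasDerivAt
  have he : ∀ i j : Fin 2, HasDerivAt (fun s => ξ s i j) (A' i j) t := by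
    intro i j
    have h2 : HasDerivAt (fun s => (ξ s : Fin 2 → Fin 2 → ℝ)) A' t := h1
    exact (hasDerivAt_pi.1 ((hasDerivAt_pi.1 h2) i)) j
  set D : ℝ := A' 0 0 * A 1 1 + A 0 0 * A' 1 1 - (A' 0 1 * A 1 0 + A 0 1 * A' 1 0) with hDdef
  have hdetd : HasDerivAt (fun s => (ξ s).det) D t := by
    have : HasDerivAt (fun s => ξ s 0 0 * ξ s 1 1 - ξ s 0 1 * ξ s 1 0) D t :=
      (((he 0 0).mul (he 1 1)).sub ((he 0 1).mul (he 1 0)))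
    simpa [Matrix.det_fin_two] using this
  have hdetne : A.det ≠ 0 := ne_of_gt hdet
  have hXd : HasDerivAt X ((1/2) * (A.det⁻¹ * D)) t := by
    have hlog : HasDerivAt (fun s => Real.log (ξ s).det) (A.det⁻¹ * D) t := by
      exact (Real.hasDerivAt_log hdetne).comp t hdetd
    have hXf : X = fun s => (1/2) * Real.log (ξ s).det := funext hX
    rw [hXf]
    exact hlog.const_mul (1/2 : ℝ)
  set c : ℝ := deriv X t with hcdef
  have hc : c = (1/2) * (A.det⁻¹ * D) := hXd.deriv ▸ rfl
  set a : ℝ := Real.exp (-X t) with hadef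
  have hane : a ≠ 0 := Real.exp_ne_zero _
  have hexpd : HasDerivAt (fun s => Real.exp (-X s)) (-c * a) t := by
    have := (Real.hasDerivAt_exp (-X t)).comp t hXd.neg
    exact this.congr_deriv (by rw [hc]; ring)
  have hσd : HasDerivAt σ (a • A' + (-c * a) • A) t := by
    have hσf : σ = fun s => Real.exp (-X s) • ξ s := funext hσ
    rw [hσf]
    exact hexpd.smul h1
  have hσt : σ t = a • A := hσ t
  have hAinv : A⁻¹ * A = 1 := Matrix.nonsing_inv_mul A (isUnit_iff_ne_zero.2 hdetne)
  have hσinv : (σ t)⁻¹ = a⁻¹ • A⁻¹ := by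
    rw [hσt]
    haveI : Invertible a := invertibleOfNonzero hane
    rw [Matrix.inv_smul (A := A) a (isUnit_iff_ne_zero.2 hdetne)]
    simp [invOf_eq_inv]
  have htr : Matrix.trace (A⁻¹ * A') = 2 * c := by
    rw [hc, Matrix.inv_def, Matrix.adjugate_fin_two]
    simp only [Matrix.trace_fin_two, Matrix.mul_apply, Fin.sum_univ_two, Ring.inverse_eq_inv,
      Matrix.smul_apply, Matrix.of_apply, Matrix.cons_val', Matrix.cons_val_zero,
      Matrix.cons_val_one, Matrix.head_cons, Matrix.head_fin_const, Matrix.empty_val',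
      Matrix.cons_val_fin_one, smul_eq_mul, hDdef]
    field_simp
    ring
  set B : Matrix (Fin 2) (Fin 2) ℝ := A⁻¹ * A' with hBdef
  have hkey : (σ t)⁻¹ * deriv σ t = B - c • 1 := by
    rw [hσinv, show deriv σ t = a • A' + (-c * a) • A from hσd.deriv]
    rw [Matrix.smul_mul, Matrix.mul_add, Matrix.mul_smul, Matrix.mul_smul, hAinv]
    rw [smul_add, smul_smul, smul_smul, inv_mul_cancel₀ hane, one_smul]
    have h3 : a⁻¹ * (-c * a) = -c := by field_simp
    rw [h3, sub_eq_add_neg, neg_smul]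
  have hgoal2 : (σ t)⁻¹ * deriv σ t * (σ t)⁻¹ * deriv σ t = (B - c • 1) * (B - c • 1) := by
    rw [mul_assoc, hkey]
  rw [hgoal2]
  have htrI : Matrix.trace (1 : Matrix (Fin 2) (Fin 2) ℝ) = 2 := by
    simp [Matrix.trace_one]
  have expand : Matrix.trace ((B - c • 1) * (B - c • 1))
      = Matrix.trace (B * B) - 2 * c * Matrix.trace B + c^2 * 2 := by
    rw [Matrix.sub_mul, Matrix.mul_sub, Matrix.mul_sub]
    rw [Matrix.smul_mul, Matrix.mul_smul, Matrix.smul_mul]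
    simp only [Matrix.one_mul, Matrix.mul_one, smul_smul]
    rw [Matrix.trace_sub, Matrix.trace_sub, Matrix.trace_sub]
    simp only [Matrix.trace_smul, smul_eq_mul, htrI]
    ring
  have hBB : A⁻¹ * A' * A⁻¹ * A' = B * B := by rw [hBdef, mul_assoc]
  rw [hBB, expand, htr, hBdef]
  ring
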